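/- Let p ≥ 2 be an even integer. The intersection of the Multibrot set M^p with the real line equals the closed interval [-2^{1/(p-1)}, (p-1)/p^{p/(p-1)}]. That is, for real c, the sequence {Q_{p,c}^n(0)}_{n≥1} with Q_{p,c}(z) = z^p + c is bounded if and only if -2^{1/(p-1)} ≤ c ≤ (p-1)/p^{p/(p-1)}. -/

import Mathlib

open Real

theorem stmt_10 (p : ℕ) (hp : 2 ≤ p) (hpe : Even p) (c : ℝ) :
    (∃ M : ℝ, ∀ n : ℕ, 1 ≤ n → |(fun x : ℝ => x ^ p + c)^[n] 0| ≤ M) ↔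
      -(2 : ℝ) ^ ((1 : ℝ) / ((p : ℝ) - 1)) ≤ c ∧
        c ≤ ((p : ℝ) - 1) / (p : ℝ) ^ ((p : ℝ) / ((p : ℝ) - 1)) := by
  set P : ℝ := (p : ℝ) with hPdef
  have hP2 : (2 : ℝ) ≤ P := by rw [hPdef]; exact_mod_cast hp
  have hPm1 : (0 : ℝ) < P - 1 := by linarith
  have hcast : ((p - 1 : ℕ) : ℝ) = P - 1 := by
    have : (1 : ℕ) ≤ p := by omega
    push_cast [Nat.cast_sub this]; ring
  -- a := 2^(1/(P-1)), the left endpoint magnitude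
  set a : ℝ := (2 : ℝ) ^ ((1 : ℝ) / (P - 1)) with hadef
  have ha_pos : 0 < a := rpow_pos_of_pos two_pos _
  have ha_pow : a ^ (p - 1) = 2 := by
    rw [hadef, ← rpow_natCast _ (p - 1), hcast, ← rpow_mul (by norm_num : (0:ℝ) ≤ 2)]
    rw [one_div, inv_mul_cancel₀ (ne_of_gt hPm1), rpow_one]
  -- t := P^(1/(P-1))
  set t : ℝ := P ^ ((1 : ℝ) / (P - 1)) with htdef
  have hPpos : (0 : ℝ) < P := by linarith
  have ht_pos : 0 < t := rpow_pos_of_pos hPpos _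
  have ht_pow1 : t ^ (p - 1) = P := by
    rw [htdef, ← rpow_natCast _ (p - 1), hcast, ← rpow_mul hPpos.le]
    rw [one_div, inv_mul_cancel₀ (ne_of_gt hPm1), rpow_one]
  have ht_powp : t ^ p = P * t := by
    have : p = (p - 1) + 1 := by omega
    rw [this, pow_succ, ht_pow1]
  have hPt : P ^ (P / (P - 1)) = P * t := by
    have h1 : P / (P - 1) = 1 + 1 / (P - 1) := by field_simp; ring
    rw [h1, rpow_add hPpos, rpow_one, htdef]
  have hPtpos : 0 < P * t := mul_pos hPpos ht_pos
  -- Bernoulli-type inequality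
  have bern : ∀ y : ℝ, P * y ≤ y ^ p + (P - 1) := by
    intro y
    rcases le_or_gt (-2 : ℝ) (y - 1) with h | h
    · have := one_add_mul_le_pow h p
      have h2 : (1 : ℝ) + p * (y - 1) ≤ y ^ p := by
        simpa using this
      rw [← hPdef] at h2
      nlinarith
    · have h0 : 0 ≤ y ^ p := hpe.pow_nonneg y
      nlinarith
  -- key inequality : x ≤ x^p + c* for all x, c* = (P-1)/(P*t)
  have keyA : ∀ x : ℝ, x ≤ x ^ p + (P - 1) / (P * t) := by
    intro x
    have h := bern (t * x)
    rw [mul_pow, ht_powp] at h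
    have h2 : x * (P * t) ≤ (x ^ p + (P - 1) / (P * t)) * (P * t) := by
      rw [add_mul, div_mul_cancel₀ _ (ne_of_gt hPtpos)]
      nlinarith
    exact le_of_mul_le_mul_right h2 hPtpos
  have hcstar : ((p : ℝ) - 1) / (p : ℝ) ^ ((P : ℝ) / (P - 1)) = (P - 1) / (P * t) := by
    rw [← hPdef, hPt]
  constructor
  · rintro ⟨M, hM⟩
    set f : ℝ → ℝ := fun x : ℝ => x ^ p + c with hf
    have hx1 : f^[1] 0 = c := by
      simp [hf, zero_pow (by omega : p ≠ 0)]
    constructor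
    · -- show -a ≤ c
      by_contra hlt
      push_neg at hlt  -- c < -a
      have hcneg : 0 < -c := by linarith
      set lam : ℝ := (-c) ^ (p - 1) - 1 with hlam
      have hlam1 : 1 < lam := by
        have h2 : (2:ℝ) < (-c) ^ (p - 1) := by
          calc (2:ℝ) = a ^ (p-1) := ha_pow.symm
          _ < (-c) ^ (p-1) := by
            apply pow_lt_pow_left₀ (by linarith) ha_pos.le (by omega)
        rw [hlam]; linarith
      have hgrow : ∀ m : ℕ, (-c) * lam ^ m ≤ |f^[m + 1] 0| := by
        intro m
        induction m with
        | zero =>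
          simp only [zero_add, pow_zero, mul_one, hx1]
          rw [abs_of_neg (show c < 0 by linarith)]
        | succ k ih =>
          have hk : -c ≤ |f^[k+1] 0| := by
            calc -c = (-c) * 1 := by ring
            _ ≤ (-c) * lam ^ k := by
              apply mul_le_mul_of_nonneg_left _ hcneg.le
              exact one_le_pow₀ hlam1.le
            _ ≤ |f^[k+1] 0| := ih
          set y : ℝ := f^[k+1] 0 with hy
          have hstep : f^[k+2] 0 = y ^ p + c := by
            rw [Function.iterate_succ_apply' f (k+1) 0]
          have hyp : |y| ^ p = y ^ p := hpe.pow_abs y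
          have hyabs : 0 ≤ |y| := abs_nonneg y
          have h1 : |y| * (-c) ^ (p-1) ≤ |y| ^ p := by
            have hsplit : |y| ^ p = |y| * |y| ^ (p - 1) := by
              conv_lhs => rw [show p = 1 + (p - 1) by omega]
              rw [pow_add, pow_one]
            rw [hsplit]
            exact mul_le_mul_of_nonneg_left
              (pow_le_pow_left₀ (by linarith) hk _) hyabs
          have h2 : |y| * lam ≤ y ^ p + c := by
            rw [← hyp]
            have : -|y| ≤ c := by linarith [abs_nonneg y, hk]
            nlinarith
          have hpos : 0 ≤ y ^ p + c := by
            have : 0 ≤ |y| * lam := mul_nonneg hyabs (by linarith)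
            linarith
          calc (-c) * lam ^ (k+1) = ((-c) * lam ^ k) * lam := by ring
          _ ≤ |y| * lam := mul_le_mul_of_nonneg_right ih (by linarith)
          _ ≤ y ^ p + c := h2
          _ = |f^[k+2] 0| := by rw [hstep.symm] at hpos ⊢; rw [abs_of_nonneg hpos]
      obtain ⟨m, hm⟩ := pow_unbounded_of_one_lt (M / (-c)) hlam1
      have h1 := hgrow m
      have h2 := hM (m + 1) (by omega)
      have : M < (-c) * lam ^ m := by
        rw [div_lt_iff₀ hcneg] at hm; linarith [hm]
      linarith
    · -- show c ≤ c*
      rw [hcstar]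
      by_contra hlt
      push_neg at hlt
      set cs : ℝ := (P - 1) / (P * t) with hcs
      set d : ℝ := c - cs with hd
      have hdpos : 0 < d := by rw [hd]; linarith
      have hgrow : ∀ m : ℕ, c + m * d ≤ f^[m + 1] 0 := by
        intro m
        induction m with
        | zero =>
          simp only [zero_add, Nat.cast_zero, zero_mul, add_zero, hx1]
          exact le_rfl
        | succ k ih =>
          have hstep : f^[k+2] 0 = (f^[k+1] 0) ^ p + c := by
            rw [Function.iterate_succ_apply' f (k+1) 0]
          have h1 := keyA (f^[k+1] 0)
          rw [hstep]
          push_cast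
          have : c + (k:ℝ) * d + d ≤ (f^[k+1] 0) + d := by linarith
          calc c + ((k:ℝ) + 1) * d = (c + (k:ℝ)*d) + d := by ring
          _ ≤ f^[k+1] 0 + d := by linarith
          _ ≤ (f^[k+1] 0) ^ p + cs + d := by linarith [keyA (f^[k+1] 0)]
          _ = (f^[k+1] 0) ^ p + c := by rw [hd]; ring
      obtain ⟨m, hm⟩ := exists_nat_gt ((M - c) / d)
      have h1 := hgrow m
      have h2 := hM (m + 1) (by omega)
      have h3 : f^[m+1] 0 ≤ M := (le_abs_self _).trans h2
      rw [div_lt_iff₀ hdpos] at hm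
      linarith
  · rintro ⟨h1, h2⟩
    set f : ℝ → ℝ := fun x : ℝ => x ^ p + c with hf
    rw [hcstar] at h2
    rcases le_or_gt 0 c with hc0 | hc0
    · -- invariant interval [0, 1/t]
      set q : ℝ := t⁻¹ with hq
      have hqpos : 0 < q := inv_pos.mpr ht_pos
      have hqp : q ^ p = (P * t)⁻¹ := by
        rw [hq, inv_pow, ht_powp]
      have hinv : ∀ n : ℕ, 0 ≤ f^[n] 0 ∧ f^[n] 0 ≤ q := by
        intro n
        induction n with
        | zero => simp [hqpos.le]
        | succ k ih =>
          rw [Function.iterate_succ_apply' f k 0]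
          obtain ⟨ih1, ih2⟩ := ih
          constructor
          · have : 0 ≤ (f^[k] 0) ^ p := hpe.pow_nonneg _
            simp only [hf]; linarith
          · have hpow : (f^[k] 0) ^ p ≤ q ^ p := pow_le_pow_left₀ ih1 ih2 p
            have : q ^ p + c ≤ q := by
              have hq1 : (P*t)⁻¹ + (P-1)/(P*t) = q := by
                rw [hq]
                field_simp
                ring
              rw [hqp]
              linarith
            simp only [hf]; linarith
      exact ⟨q, fun n _ => by
        obtain ⟨g1, g2⟩ := hinv n
        rw [abs_of_nonneg g1]; exact g2⟩
    · -- invariant interval [-(-c), -c]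
      set b : ℝ := -c with hb
      have hbpos : 0 < b := by rw [hb]; linarith
      have hba : b ≤ a := by rw [hb]; linarith
      have hb2 : b ^ (p - 1) ≤ 2 := by
        calc b ^ (p-1) ≤ a ^ (p-1) := pow_le_pow_left₀ hbpos.le hba _
        _ = 2 := ha_pow
      have hinv : ∀ n : ℕ, |f^[n] 0| ≤ b := by
        intro n
        induction n with
        | zero => simpa using hbpos.le
        | succ k ih =>
          rw [Function.iterate_succ_apply' f k 0]
          set y : ℝ := f^[k] 0 with hy
          have hyp : y ^ p = |y| ^ p := (hpe.pow_abs y).symm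
          have h3 : |y| ^ p ≤ b ^ p := pow_le_pow_left₀ (abs_nonneg y) ih p
          have h4 : b ^ p ≤ 2 * b := by
            calc b ^ p = b ^ (p-1) * b := by
                  conv_lhs => rw [show p = (p-1) + 1 by omega]
                  rw [pow_succ]
            _ ≤ 2 * b := mul_le_mul_of_nonneg_right hb2 hbpos.le
          have h5 : 0 ≤ y ^ p := hpe.pow_nonneg y
          have hc' : c = -b := by rw [hb]; ring
          rw [abs_le]
          constructor
          · simp only [hf]; rw [hc']; linarith
          · simp only [hf]; rw [hc']; linarith [hyp ▸ h3]
      exact ⟨b, fun n _ => hinv n⟩
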